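/- Let P(z) = Σ_{j=0}^m A_j z^j be a matrix polynomial with A_j ∈ M_{n,n}(ℂ) and A_m invertible. Then every eigenvalue λ of P (i.e., every λ with P(λ)u = 0 for some nonzero vector u) satisfies |λ| ≤ ρ, where ρ is the unique positive root of the equation ‖A_m^{-1}‖^{-1} x^m − ‖A_{m-1}‖ x^{m-1} − ... − ‖A_1‖ x − ‖A_0‖ = 0, with ‖·‖ a subordinate (operator) matrix norm. -/

import Mathlib

set_option maxHeartbeats 1000000
set_option synthInstance.maxHeartbeats 400000


/-- Operator norm of a complex matrix, subordinate to the Euclidean vector norm. -/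
noncomputable def opNorm {n : ℕ} (A : Matrix (Fin n) (Fin n) ℂ) : ℝ :=
  ‖Matrix.toEuclideanCLM (𝕜 := ℂ) A‖

/-- Cauchy-type bound for matrix polynomials: all eigenvalues of
`P(z) = ∑_{j=0}^m A_j z^j` (with `A_m` invertible) lie in `|z| ≤ ρ`, where `ρ` is the
unique positive root of `‖A_m⁻¹‖⁻¹ x^m − ∑_{j=0}^{m-1} ‖A_j‖ x^j = 0`. -/
theorem matrixPoly_eigenvalue_bound_cauchy {n : ℕ} (m : ℕ) (hm : 0 < m)
    (A : ℕ → Matrix (Fin n) (Fin n) ℂ) (hA : IsUnit (A m).det)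
    (ρ : ℝ) (hρpos : 0 < ρ)
    (hρroot : (opNorm (A m)⁻¹)⁻¹ * ρ ^ m
        - ∑ j ∈ Finset.range m, opNorm (A j) * ρ ^ j = 0)
    (lam : ℂ)
    (hlam : (∑ j ∈ Finset.range (m + 1), lam ^ j • A j).det = 0) :
    ‖lam‖ ≤ ρ := by
  by_contra hcon
  push_neg at hcon
  set r := ‖lam‖ with hr
  rcases Nat.eq_zero_or_pos n with hn | hn
  · subst hn
    simp [Matrix.det_fin_zero] at hlam
  haveI : NeZero n := ⟨hn.ne'⟩
  set φ := Matrix.toEuclideanCLM (𝕜 := ℂ) (n := Fin n) with hφ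
  have hrpos : 0 < r := lt_trans hρpos hcon
  have hlamne : lam ≠ 0 := norm_ne_zero_iff.mp (by rw [← hr]; exact hrpos.ne')
  -- κ := opNorm (A m)⁻¹ is positive
  have hinvne : (A m)⁻¹ ≠ 0 := by
    intro h
    have h1 : (A m) * (A m)⁻¹ = 1 := Matrix.mul_nonsing_inv _ hA
    rw [h, mul_zero] at h1
    exact one_ne_zero h1.symm
  set κ := opNorm (A m)⁻¹ with hκ
  have hκpos : 0 < κ := by
    rw [hκ]
    show 0 < ‖φ (A m)⁻¹‖
    rw [norm_pos_iff]
    intro h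
    exact hinvne (by simpa using φ.injective (by simpa using h))
  set c := κ⁻¹ with hc
  have hcpos : 0 < c := inv_pos.mpr hκpos
  set S := ∑ j ∈ Finset.range m, opNorm (A j) * ρ ^ j with hS
  have hSeq : S = c * ρ ^ m := by rw [hS]; linarith [hρroot]
  have hSpos : 0 < S := by
    rw [hSeq]; positivity
  -- some j0 with positive term
  obtain ⟨j0, hj0mem, hj0pos⟩ : ∃ j0 ∈ Finset.range m, 0 < opNorm (A j0) * ρ ^ j0 := by
    by_contra h
    push_neg at h
    have : S ≤ 0 := Finset.sum_nonpos h
    linarith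
  -- key inequality
  have hdiv1 : 1 < r / ρ := (one_lt_div hρpos).mpr hcon
  have hkey : ∑ j ∈ Finset.range m, opNorm (A j) * r ^ j < c * r ^ m := by
    have hle : ∀ j ∈ Finset.range m,
        opNorm (A j) * r ^ j ≤ opNorm (A j) * ρ ^ j * (r / ρ) ^ m := by
      intro j hj
      have hjm : j ≤ m := le_of_lt (Finset.mem_range.mp hj)
      have h1 : (r / ρ) ^ j ≤ (r / ρ) ^ m := pow_le_pow_right₀ hdiv1.le hjm
      have h2 : r ^ j = ρ ^ j * (r / ρ) ^ j := by
        rw [div_pow]; field_simp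
      rw [h2, ← mul_assoc]
      have honn : 0 ≤ opNorm (A j) * ρ ^ j := by
        have : 0 ≤ opNorm (A j) := norm_nonneg _
        positivity
      exact mul_le_mul_of_nonneg_left h1 honn
    have hlt : opNorm (A j0) * r ^ j0 < opNorm (A j0) * ρ ^ j0 * (r / ρ) ^ m := by
      have hjm : j0 < m := Finset.mem_range.mp hj0mem
      have h1 : (r / ρ) ^ j0 < (r / ρ) ^ m := pow_lt_pow_right₀ hdiv1 hjm
      have h2 : r ^ j0 = ρ ^ j0 * (r / ρ) ^ j0 := by
        rw [div_pow]; field_simp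
      rw [h2, ← mul_assoc]
      exact mul_lt_mul_of_pos_left h1 hj0pos
    calc ∑ j ∈ Finset.range m, opNorm (A j) * r ^ j
        < ∑ j ∈ Finset.range m, opNorm (A j) * ρ ^ j * (r / ρ) ^ m := by
          refine Finset.sum_lt_sum hle ⟨j0, hj0mem, hlt⟩
      _ = S * (r / ρ) ^ m := by rw [hS, Finset.sum_mul]
      _ = c * r ^ m := by
          rw [hSeq, div_pow, mul_assoc]
          field_simp
  -- linear-map side
  set u := φ (A m) with hu
  set v := φ (A m)⁻¹ with hv
  have huv : u * v = 1 := by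
    rw [hu, hv, ← map_mul, Matrix.mul_nonsing_inv _ hA, map_one]
  have hvu : v * u = 1 := by
    rw [hu, hv, ← map_mul, Matrix.nonsing_inv_mul _ hA, map_one]
  set Tq := ∑ j ∈ Finset.range m, lam ^ j • φ (A j) with hTq
  have hlamm : (lam : ℂ) ^ m ≠ 0 := pow_ne_zero _ hlamne
  set B := (lam ^ m)⁻¹ • (v * Tq) with hB
  have hfact : φ (∑ j ∈ Finset.range (m + 1), lam ^ j • A j)
      = u * (lam ^ m • (1 - (-B))) := by
    rw [map_sum]
    simp_rw [_root_.map_smul]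
    rw [Finset.sum_range_succ]
    rw [sub_neg_eq_add, mul_smul_comm, mul_add, mul_one, hB, mul_smul_comm,
      ← mul_assoc, huv, one_mul, smul_add, smul_smul, mul_inv_cancel₀ hlamm, one_smul]
    exact add_comm _ _
  -- norm bound
  have hnormTq : ‖Tq‖ ≤ ∑ j ∈ Finset.range m, opNorm (A j) * r ^ j := by
    refine le_trans (norm_sum_le _ _) (Finset.sum_le_sum fun j hj => ?_)
    have e : ‖lam ^ j • φ (A j)‖ = ‖lam ^ j‖ * ‖φ (A j)‖ := norm_smul (lam ^ j) (φ (A j))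
    rw [e, norm_pow, ← hr]
    exact le_of_eq (mul_comm _ _)
  have hnormB : ‖(-B : EuclideanSpace ℂ (Fin n) →L[ℂ] EuclideanSpace ℂ (Fin n))‖ < 1 := by
    have e : ‖B‖ = ‖(lam ^ m)⁻¹‖ * ‖v * Tq‖ := norm_smul ((lam ^ m)⁻¹) (v * Tq)
    rw [norm_neg, e]
    have h1 : ‖(lam ^ m)⁻¹‖ = (r ^ m)⁻¹ := by
      rw [norm_inv, norm_pow, ← hr]
    have h2 : ‖v * Tq‖ ≤ κ * ‖Tq‖ := norm_mul_le _ _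
    have h3 : ‖v * Tq‖ < κ * (c * r ^ m) := by
      refine lt_of_le_of_lt h2 ?_
      exact mul_lt_mul_of_pos_left (lt_of_le_of_lt hnormTq hkey) hκpos
    rw [h1]
    have hrm : (0:ℝ) < r ^ m := by positivity
    calc (r ^ m)⁻¹ * ‖v * Tq‖ < (r ^ m)⁻¹ * (κ * (c * r ^ m)) := by
          exact mul_lt_mul_of_pos_left h3 (inv_pos.mpr hrm)
      _ = 1 := by
          rw [hc]; field_simp
  -- conclude
  have hunit : IsUnit (φ (∑ j ∈ Finset.range (m + 1), lam ^ j • A j)) := by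
    rw [hfact]
    refine IsUnit.mul ⟨⟨u, v, huv, hvu⟩, rfl⟩ ?_
    have e : lam ^ m • (1 - -B) = algebraMap ℂ _ (lam ^ m) * (1 - -B) := Algebra.smul_def (lam ^ m) (1 - -B)
    rw [e]
    exact ((IsUnit.mk0 _ hlamm).map
      (algebraMap ℂ (EuclideanSpace ℂ (Fin n) →L[ℂ] EuclideanSpace ℂ (Fin n)))).mul
      (Units.oneSub (-B) hnormB).isUnit
  have hP : IsUnit (∑ j ∈ Finset.range (m + 1), lam ^ j • A j) := by
    have := hunit.map φ.symm
    simpa [hφ] using this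
  exact ((Matrix.isUnit_iff_isUnit_det _).mp hP).ne_zero hlam
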